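/- Let 0 ≤ k ≤ r and suppose the index sequence j = (j_1,…,j_r) satisfies v_i = V_{i-1}(j_i,:) ≠ 0 for every i = 1,…,k. Then the k-th iterate of the ARP recursion satisfies ‖V_k‖_F² = r − k. In particular, the quantities ‖V_k(j,:)‖₂²/(r−k) for j = 1,…,n sum to 1 when k < r. -/

import Mathlib

open Matrix BigOperators

/-- One step of the ARP recursion: project out the `i`-th row of `W`
(convention: leave `W` unchanged if that row is zero). -/
noncomputable def arpStep {n r : ℕ} (W : Matrix (Fin n) (Fin r) ℝ) (i : Fin n) :
    Matrix (Fin n) (Fin r) ℝ :=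
  if W i = 0 then W
  else W * (1 - (∑ l, (W i l) ^ 2)⁻¹ • Matrix.of fun a b => W i a * W i b)

/-- The ARP iterates `V_k`. -/
noncomputable def arpIter {n r : ℕ} (V : Matrix (Fin n) (Fin r) ℝ) (j : Fin r → Fin n) :
    ℕ → Matrix (Fin n) (Fin r) ℝ
  | 0 => V
  | k + 1 => if h : k < r then arpStep (arpIter V j k) (j ⟨k, h⟩) else arpIter V j k

/-- The ARP weight `w(j) = ∏_{k=1}^r ‖v_k‖²/(r-k+1)`. -/
noncomputable def arpWeight {n r : ℕ} (V : Matrix (Fin n) (Fin r) ℝ) (j : Fin r → Fin n) : ℝ :=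
  ∏ k : Fin r, (∑ l, (arpIter V j k.val (j k) l) ^ 2) / ((r : ℝ) - (k.val : ℝ))

/-- The matrix `E_J` whose `k`-th column is the `j_k`-th standard basis vector of ℝⁿ. -/
def EJ {n k : ℕ} (j : Fin k → Fin n) : Matrix (Fin n) (Fin k) ℝ :=
  Matrix.of fun i l => if i = j l then 1 else 0

/-- Squared Frobenius norm. -/
def frobSq {m n : ℕ} (A : Matrix (Fin m) (Fin n) ℝ) : ℝ := ∑ i, ∑ j, (A i j) ^ 2

private lemma vmv_mul_vmv {r : ℕ} (v w x y : Fin r → ℝ) :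
    vecMulVec v w * vecMulVec x y = (w ⬝ᵥ x) • vecMulVec v y := by
  ext a b
  simp only [mul_apply, vecMulVec_apply, Matrix.smul_apply, dotProduct, smul_eq_mul, Finset.sum_mul]
  exact Finset.sum_congr rfl fun l _ => by ring

private lemma mul_vmv {r : ℕ} (Q : Matrix (Fin r) (Fin r) ℝ) (v w : Fin r → ℝ) :
    Q * vecMulVec v w = vecMulVec (Q *ᵥ v) w := by
  ext a b
  simp only [mul_apply, vecMulVec_apply, mulVec, dotProduct, Finset.sum_mul]
  exact Finset.sum_congr rfl fun l _ => by ring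

private lemma vmv_mul {r : ℕ} (Q : Matrix (Fin r) (Fin r) ℝ) (v w : Fin r → ℝ) :
    vecMulVec v w * Q = vecMulVec v (w ᵥ* Q) := by
  ext a b
  simp only [mul_apply, vecMulVec_apply, vecMul, dotProduct, Finset.mul_sum]
  exact Finset.sum_congr rfl fun l _ => by ring

private lemma trace_vmv {r : ℕ} (v w : Fin r → ℝ) : (vecMulVec v w).trace = v ⬝ᵥ w := by
  simp [trace, diag, vecMulVec_apply, dotProduct]

private lemma A_mul_vmv {n r : ℕ} (A : Matrix (Fin n) (Fin r) ℝ) (v w : Fin r → ℝ) :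
    A * vecMulVec v w = vecMulVec (A *ᵥ v) w := by
  ext a b
  simp only [mul_apply, vecMulVec_apply, mulVec, dotProduct, Finset.sum_mul]
  exact Finset.sum_congr rfl fun l _ => by ring

private lemma arp_inv {n r : ℕ} (V : Matrix (Fin n) (Fin r) ℝ) (hV : Vᵀ * V = 1)
    (j : Fin r → Fin n) :
    ∀ k : ℕ, k ≤ r → (∀ i : Fin r, (i : ℕ) < k → arpIter V j i (j i) ≠ 0) →
      (arpIter V j k) * ((arpIter V j k)ᵀ * (arpIter V j k)) = arpIter V j k ∧
      ((arpIter V j k)ᵀ * (arpIter V j k)) * ((arpIter V j k)ᵀ * (arpIter V j k))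
        = (arpIter V j k)ᵀ * (arpIter V j k) ∧
      ((arpIter V j k)ᵀ * (arpIter V j k)).trace = (r : ℝ) - (k : ℝ) := by
  intro k
  induction k with
  | zero =>
    intro _ _
    simp only [arpIter, hV, Matrix.mul_one, Nat.cast_zero, sub_zero]
    refine ⟨trivial, trivial, ?_⟩
    simp [trace_one]
  | succ k ih =>
    intro hk1 hnz
    have hk : k < r := hk1
    obtain ⟨ih1, ih2, ih3⟩ := ih (le_of_lt hk) (fun i hi => hnz i (Nat.lt_succ_of_lt hi))
    set W := arpIter V j k with hW
    set Q := Wᵀ * W with hQdef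
    set v : Fin r → ℝ := W (j ⟨k, hk⟩) with hv
    have hvne : v ≠ 0 := hnz ⟨k, hk⟩ (Nat.lt_succ_self k)
    have hstep : arpIter V j (k + 1)
        = W * (1 - (v ⬝ᵥ v)⁻¹ • vecMulVec v v) := by
      have h1 : (∑ l, (v l) ^ 2) = v ⬝ᵥ v := by simp [dotProduct, sq]
      simp only [arpIter, dif_pos hk, arpStep, ← hW, ← hv, if_neg hvne, h1]
      rfl
    set W' := arpIter V j (k + 1) with hW'
    have hs : v ⬝ᵥ v ≠ 0 := fun h => hvne (dotProduct_self_eq_zero.mp h)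
    set c : ℝ := (v ⬝ᵥ v)⁻¹ with hc
    set P : Matrix (Fin r) (Fin r) ℝ := c • vecMulVec v v with hP
    have hcs : c * (v ⬝ᵥ v) = 1 := inv_mul_cancel₀ hs
    -- v is fixed by Q on the right
    have hvQ : v ᵥ* Q = v := by
      funext b
      have := congrFun (congrFun ih1 (j ⟨k, hk⟩)) b
      simpa [mul_apply, vecMul, dotProduct] using this
    have hQsym : Qᵀ = Q := by
      rw [hQdef, transpose_mul, transpose_transpose]
    have hQv : Q *ᵥ v = v := by
      rw [← hQsym, mulVec_transpose, hvQ]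
    have hPsym : Pᵀ = P := by
      rw [hP, transpose_smul]
      congr 1
      ext a b
      simp [vecMulVec_apply, mul_comm]
    have hQP : Q * P = P := by
      rw [hP, mul_smul_comm, mul_vmv, hQv]
    have hPQ : P * Q = P := by
      rw [hP, smul_mul_assoc, vmv_mul, hvQ]
    have hPP : P * P = P := by
      rw [hP, smul_mul_assoc, mul_smul_comm, vmv_mul_vmv, smul_smul, smul_smul,
        mul_assoc, hcs, mul_one]
    have hWP : W * P = W * P := rfl
    have hW'eq : W' = W * (1 - P) := hstep
    have hQ' : W'ᵀ * W' = Q - P := by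
      rw [hW'eq, transpose_mul, transpose_sub, transpose_one, hPsym, Matrix.mul_assoc,
        ← Matrix.mul_assoc Wᵀ W (1 - P), ← hQdef]
      simp only [Matrix.sub_mul, Matrix.one_mul, Matrix.mul_sub, Matrix.mul_one]
      simp only [hQP, hPQ, hPP]
      abel
    refine ⟨?_, ?_, ?_⟩
    · rw [hQ', hW'eq, Matrix.mul_assoc]
      have h1 : (1 - P) * (Q - P) = Q - P := by
        simp only [Matrix.sub_mul, Matrix.one_mul, Matrix.mul_sub]
        simp only [hPQ, hPP]
        abel
      rw [h1, Matrix.mul_sub, ih1, Matrix.mul_sub, Matrix.mul_one]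
    · rw [hQ']
      simp only [Matrix.sub_mul, Matrix.mul_sub]
      simp only [hQP, hPQ, hPP, ih2]
      abel
    · rw [hQ', trace_sub, ih3, hP, trace_smul, trace_vmv, smul_eq_mul, hcs]
      push_cast
      ring

/-- For `0 ≤ k ≤ r`, if all rows selected in the first `k` ARP steps are
nonzero, then `‖V_k‖_F² = r − k`; in particular the numbers `‖V_k(j,:)‖₂²/(r−k)` sum
to `1` when `k < r`. -/
theorem arp_iterate_frobSq {n r : ℕ} (hn : 0 < n) (hr : 0 < r) (hrn : r ≤ n)
    (V : Matrix (Fin n) (Fin r) ℝ) (hV : Vᵀ * V = 1)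
    (j : Fin r → Fin n) (k : ℕ) (hkr : k ≤ r)
    (hnz : ∀ i : Fin r, (i : ℕ) < k → arpIter V j i (j i) ≠ 0) :
    frobSq (arpIter V j k) = (r : ℝ) - (k : ℝ) ∧
      (k < r → ∑ i : Fin n, (∑ l, (arpIter V j k i l) ^ 2) / ((r : ℝ) - (k : ℝ)) = 1) := by
    have inv := arp_inv V hV j k hkr hnz
    have htr : ((arpIter V j k)ᵀ * (arpIter V j k)).trace = frobSq (arpIter V j k) := by
      simp only [frobSq, trace, diag, mul_apply, transpose_apply, sq]
      rw [Finset.sum_comm]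
    have h1 : frobSq (arpIter V j k) = (r : ℝ) - (k : ℝ) := by rw [← htr, inv.2.2]
    refine ⟨h1, fun hklt => ?_⟩
    have hd : (r : ℝ) - (k : ℝ) ≠ 0 := by
      have : (k : ℝ) < (r : ℝ) := by exact_mod_cast hklt
      linarith
    rw [← Finset.sum_div]
    rw [show (∑ i : Fin n, ∑ l, (arpIter V j k i l) ^ 2) = frobSq (arpIter V j k) from rfl, h1,
      div_self hd]
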